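/- Let G be an induced subgraph of the triangular lattice with base coloring bc(x,y)=(x+2y) mod 3, and let v be a vertex not lying on any triangle of G whose neighbors in G all have weight 4, where v has weight 8. Then either all neighbors of v in G have the same base color (hence v is isolated in the subgraph obtained by deleting all 'light' vertices of that base color), or v has exactly two neighbors of different base colors (hence v has degree at most 1 in each of the two subgraphs obtained by deleting light vertices of one of those two colors). -/

import Mathlib

def TriLattice : SimpleGraph (ℤ × ℤ) where
  Adj u v := (v.1 - u.1, v.2 - u.2) ∈
    ({(1,0), (-1,0), (0,1), (0,-1), (1,-1), (-1,1)} : Set (ℤ × ℤ))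
  symm := by
    constructor
    intro u v h
    simp only [Set.mem_insert_iff, Set.mem_singleton_iff, Prod.mk.injEq] at *
    omega
  loopless := by
    constructor
    intro u h
    simp only [Set.mem_insert_iff, Set.mem_singleton_iff, Prod.mk.injEq] at h
    omega

instance : DecidableRel TriLattice.Adj := fun u v =>
  decidable_of_iff ((v.1 - u.1, v.2 - u.2) ∈
    ([(1,0), (-1,0), (0,1), (0,-1), (1,-1), (-1,1)] : List (ℤ × ℤ)))
    (by simp [TriLattice])

def bc (p : ℤ × ℤ) : ZMod 3 := ((p.1 + 2 * p.2 : ℤ) : ZMod 3)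

/-- Vertex set of the subgraph G_c: delete light vertices (weight < 6) of base color c. -/
def Vsub (V : Finset (ℤ × ℤ)) (d : ℤ × ℤ → ℕ) (c : ZMod 3) : Finset (ℤ × ℤ) :=
  V.filter (fun u => ¬ (d u < 6 ∧ bc u = c))

lemma bc_sub (v u : ℤ × ℤ) :
    bc u = bc v + ((u.1 - v.1 + 2 * (u.2 - v.2) : ℤ) : ZMod 3) := by
  unfold bc; push_cast; ring

lemma adj_iff {v u : ℤ × ℤ} : TriLattice.Adj v u ↔
    ((u.1 - v.1 = 1 ∧ u.2 - v.2 = 0) ∨ (u.1 - v.1 = -1 ∧ u.2 - v.2 = 0) ∨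
     (u.1 - v.1 = 0 ∧ u.2 - v.2 = 1) ∨ (u.1 - v.1 = 0 ∧ u.2 - v.2 = -1) ∨
     (u.1 - v.1 = 1 ∧ u.2 - v.2 = -1) ∨ (u.1 - v.1 = -1 ∧ u.2 - v.2 = 1)) := by
  simp [TriLattice, Set.mem_insert_iff, Set.mem_singleton_iff, Prod.ext_iff]

lemma bc_class {v u : ℤ × ℤ} (h : TriLattice.Adj v u) :
    (bc u = bc v + 1 ∧ ((u.1 - v.1 = 1 ∧ u.2 - v.2 = 0) ∨
      (u.1 - v.1 = 0 ∧ u.2 - v.2 = -1) ∨ (u.1 - v.1 = -1 ∧ u.2 - v.2 = 1))) ∨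
    (bc u = bc v + 2 ∧ ((u.1 - v.1 = -1 ∧ u.2 - v.2 = 0) ∨
      (u.1 - v.1 = 0 ∧ u.2 - v.2 = 1) ∨ (u.1 - v.1 = 1 ∧ u.2 - v.2 = -1))) := by
  rw [adj_iff] at h
  have hb := bc_sub v u
  rcases h with ⟨h1, h2⟩ | ⟨h1, h2⟩ | ⟨h1, h2⟩ | ⟨h1, h2⟩ | ⟨h1, h2⟩ | ⟨h1, h2⟩
  · left; refine ⟨?_, by omega⟩
    rw [show u.1 - v.1 + 2 * (u.2 - v.2) = 1 by omega,
      show ((1:ℤ):ZMod 3) = 1 by decide] at hb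
    exact hb
  · right; refine ⟨?_, by omega⟩
    rw [show u.1 - v.1 + 2 * (u.2 - v.2) = -1 by omega,
      show ((-1:ℤ):ZMod 3) = 2 by decide] at hb
    exact hb
  · right; refine ⟨?_, by omega⟩
    rw [show u.1 - v.1 + 2 * (u.2 - v.2) = 2 by omega,
      show ((2:ℤ):ZMod 3) = 2 by decide] at hb
    exact hb
  · left; refine ⟨?_, by omega⟩
    rw [show u.1 - v.1 + 2 * (u.2 - v.2) = -2 by omega,
      show ((-2:ℤ):ZMod 3) = 1 by decide] at hb
    exact hb
  · right; refine ⟨?_, by omega⟩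
    rw [show u.1 - v.1 + 2 * (u.2 - v.2) = -1 by omega,
      show ((-1:ℤ):ZMod 3) = 2 by decide] at hb
    exact hb
  · left; refine ⟨?_, by omega⟩
    rw [show u.1 - v.1 + 2 * (u.2 - v.2) = 1 by omega,
      show ((1:ℤ):ZMod 3) = 1 by decide] at hb
    exact hb

set_option maxHeartbeats 1000000 in
lemma opp_key (vx vy ax ay bx bz : ℤ)
    (hm : (ax - vx = -1 ∧ ay - vy = 0) ∨ (ax - vx = 0 ∧ ay - vy = 1) ∨
      (ax - vx = 1 ∧ ay - vy = -1))
    (hp : (bx - vx = 1 ∧ bz - vy = 0) ∨ (bx - vx = 0 ∧ bz - vy = -1) ∨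
      (bx - vx = -1 ∧ bz - vy = 1))
    (hnadj : ¬(bx - ax = 1 ∧ bz - ay = 0 ∨ bx - ax = -1 ∧ bz - ay = 0 ∨
      bx - ax = 0 ∧ bz - ay = 1 ∨ bx - ax = 0 ∧ bz - ay = -1 ∨
      bx - ax = 1 ∧ bz - ay = -1 ∨ bx - ax = -1 ∧ bz - ay = 1)) :
    bx = 2 * vx - ax ∧ bz = 2 * vy - ay := by
  rcases hm with h | h | h <;> rcases hp with h' | h' | h' <;> omega

set_option maxHeartbeats 1000000 in
lemma uniq_key (vx vy ux uy ax ay : ℤ)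
    (hm : (ax - vx = -1 ∧ ay - vy = 0) ∨ (ax - vx = 0 ∧ ay - vy = 1) ∨
      (ax - vx = 1 ∧ ay - vy = -1))
    (hadj : ux - vx = 1 ∧ uy - vy = 0 ∨ ux - vx = -1 ∧ uy - vy = 0 ∨
      ux - vx = 0 ∧ uy - vy = 1 ∨ ux - vx = 0 ∧ uy - vy = -1 ∨
      ux - vx = 1 ∧ uy - vy = -1 ∨ ux - vx = -1 ∧ uy - vy = 1)
    (hn1 : ¬(ax - ux = 1 ∧ ay - uy = 0 ∨ ax - ux = -1 ∧ ay - uy = 0 ∨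
      ax - ux = 0 ∧ ay - uy = 1 ∨ ax - ux = 0 ∧ ay - uy = -1 ∨
      ax - ux = 1 ∧ ay - uy = -1 ∨ ax - ux = -1 ∧ ay - uy = 1))
    (hn2 : ¬((2 * vx - ax) - ux = 1 ∧ (2 * vy - ay) - uy = 0 ∨
      (2 * vx - ax) - ux = -1 ∧ (2 * vy - ay) - uy = 0 ∨
      (2 * vx - ax) - ux = 0 ∧ (2 * vy - ay) - uy = 1 ∨
      (2 * vx - ax) - ux = 0 ∧ (2 * vy - ay) - uy = -1 ∨
      (2 * vx - ax) - ux = 1 ∧ (2 * vy - ay) - uy = -1 ∨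
      (2 * vx - ax) - ux = -1 ∧ (2 * vy - ay) - uy = 1))
    (e1 : ¬(ux = ax ∧ uy = ay)) (e2 : ¬(ux = 2 * vx - ax ∧ uy = 2 * vy - ay)) :
    False := by
  rcases hm with h | h | h <;>
    rcases hadj with h' | h' | h' | h' | h' | h' <;> omega

/-- A weight-8 vertex not on a triangle, all of whose neighbors are light (weight 4),
is isolated in one of the subgraphs G_c or has degree ≤ 1 in two of them. -/
theorem heavy_vertex_dichotomy (V : Finset (ℤ × ℤ)) (d : ℤ × ℤ → ℕ)
    (v : ℤ × ℤ) (hv : v ∈ V) (hd : d v = 8)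
    (hlight : ∀ u ∈ V, TriLattice.Adj v u → d u = 4)
    (hnt : ∀ u ∈ V, ∀ w ∈ V,
      TriLattice.Adj v u → TriLattice.Adj v w → ¬ TriLattice.Adj u w) :
    (∃ c : ZMod 3, (∀ u ∈ V, TriLattice.Adj v u → bc u = c) ∧
      ∀ u ∈ Vsub V d c, ¬ TriLattice.Adj v u) ∨
    (∃ u₁ ∈ V, ∃ u₂ ∈ V, TriLattice.Adj v u₁ ∧ TriLattice.Adj v u₂ ∧
      bc u₁ ≠ bc u₂ ∧ (∀ u ∈ V, TriLattice.Adj v u → u = u₁ ∨ u = u₂) ∧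
      ((Vsub V d (bc u₁)).filter (fun u => TriLattice.Adj v u)).card ≤ 1 ∧
      ((Vsub V d (bc u₂)).filter (fun u => TriLattice.Adj v u)).card ≤ 1) := by
  by_cases h1 : ∀ u ∈ V, TriLattice.Adj v u → bc u = bc v + 1
  · left
    refine ⟨bc v + 1, h1, fun u hu hadj => ?_⟩
    rw [Vsub, Finset.mem_filter] at hu
    exact hu.2 ⟨by rw [hlight u hu.1 hadj]; norm_num, h1 u hu.1 hadj⟩
  by_cases h2 : ∀ u ∈ V, TriLattice.Adj v u → bc u = bc v + 2
  · left
    refine ⟨bc v + 2, h2, fun u hu hadj => ?_⟩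
    rw [Vsub, Finset.mem_filter] at hu
    exact hu.2 ⟨by rw [hlight u hu.1 hadj]; norm_num, h2 u hu.1 hadj⟩
  push_neg at h1 h2
  obtain ⟨u₁, hu₁V, hadj₁, hbc₁⟩ := h1
  obtain ⟨u₂, hu₂V, hadj₂, hbc₂⟩ := h2
  have hvne : bc v + 1 ≠ bc v + 2 := by
    intro h
    exact (by decide : (1 : ZMod 3) ≠ 2) (add_left_cancel h)
  have c₁ : bc u₁ = bc v + 2 ∧ ((u₁.1 - v.1 = -1 ∧ u₁.2 - v.2 = 0) ∨
      (u₁.1 - v.1 = 0 ∧ u₁.2 - v.2 = 1) ∨ (u₁.1 - v.1 = 1 ∧ u₁.2 - v.2 = -1)) := by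
    rcases bc_class hadj₁ with ⟨h, _⟩ | h
    · exact absurd h hbc₁
    · exact h
  have c₂ : bc u₂ = bc v + 1 ∧ ((u₂.1 - v.1 = 1 ∧ u₂.2 - v.2 = 0) ∨
      (u₂.1 - v.1 = 0 ∧ u₂.2 - v.2 = -1) ∨ (u₂.1 - v.1 = -1 ∧ u₂.2 - v.2 = 1)) := by
    rcases bc_class hadj₂ with h | ⟨h, _⟩
    · exact h
    · exact absurd h hbc₂
  have hnadj := hnt u₁ hu₁V u₂ hu₂V hadj₁ hadj₂
  rw [adj_iff] at hnadj
  have hopp : u₂.1 = 2 * v.1 - u₁.1 ∧ u₂.2 = 2 * v.2 - u₁.2 :=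
    opp_key v.1 v.2 u₁.1 u₁.2 u₂.1 u₂.2 c₁.2 c₂.2 hnadj
  have hbcne : bc u₁ ≠ bc u₂ := by
    rw [c₁.1, c₂.1]; exact fun h => hvne h.symm
  have huniq : ∀ u ∈ V, TriLattice.Adj v u → u = u₁ ∨ u = u₂ := by
    intro u hu hadj
    by_contra hcon
    push_neg at hcon
    have hn1 := hnt u hu u₁ hu₁V hadj hadj₁
    have hn2 := hnt u hu u₂ hu₂V hadj hadj₂
    rw [adj_iff] at hadj hn1 hn2
    rw [hopp.1, hopp.2] at hn2
    exact uniq_key v.1 v.2 u.1 u.2 u₁.1 u₁.2 c₁.2 hadj hn1 hn2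
      (fun h => hcon.1 (Prod.ext h.1 h.2))
      (fun h => hcon.2 (Prod.ext (h.1.trans hopp.1.symm) (h.2.trans hopp.2.symm)))
  have hcard : ∀ (c : ZMod 3) (w : ℤ × ℤ),
      (∀ u ∈ V, TriLattice.Adj v u → u ∈ Vsub V d c → u = w) →
      ((Vsub V d c).filter (fun u => TriLattice.Adj v u)).card ≤ 1 := by
    intro c w hw
    refine Finset.card_le_one.mpr fun a ha b hb => ?_
    rw [Finset.mem_filter] at ha hb
    have haV : a ∈ V := Finset.mem_of_mem_filter a ha.1
    have hbV : b ∈ V := Finset.mem_of_mem_filter b hb.1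
    rw [hw a haV ha.2 ha.1, hw b hbV hb.2 hb.1]
  right
  refine ⟨u₁, hu₁V, u₂, hu₂V, hadj₁, hadj₂, hbcne, huniq, ?_, ?_⟩
  · refine hcard (bc u₁) u₂ fun u hu hadj hmem => ?_
    rcases huniq u hu hadj with rfl | rfl
    · exfalso
      rw [Vsub, Finset.mem_filter] at hmem
      exact hmem.2 ⟨by rw [hlight u hu hadj]; norm_num, rfl⟩
    · rfl
  · refine hcard (bc u₂) u₁ fun u hu hadj hmem => ?_
    rcases huniq u hu hadj with rfl | rfl
    · rfl
    · exfalso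
      rw [Vsub, Finset.mem_filter] at hmem
      exact hmem.2 ⟨by rw [hlight u hu hadj]; norm_num, rfl⟩
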